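/- Let r ∈ ℂ with r ≠ 0 and set ν = −(1/(2π))·ln(1 + |r|²) (so ν < 0). Define β₁₂ = √(2π)·e^{iπ/4}·e^{−πν/2} / ( conj(r)·Γ(−i·ν) ) and β₂₁ = −√(2π)·e^{−iπ/4}·e^{−πν/2} / ( r·Γ(i·ν) ), where Γ is the complex Gamma function. Then β₁₂·β₂₁ = ν. -/

import Mathlib

/-- With ν = −(1/(2π))·ln(1 + |r|²) for r ≠ 0, the coefficients
β₁₂ = √(2π)·e^{iπ/4}·e^{−πν/2}/(conj(r)·Γ(−iν)) and
β₂₁ = −√(2π)·e^{−iπ/4}·e^{−πν/2}/(r·Γ(iν)) satisfy β₁₂·β₂₁ = ν. -/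
theorem beta_product_eq_nu (r : ℂ) (hr : r ≠ 0) (ν : ℝ)
    (hν : ν = -(1 / (2 * Real.pi)) * Real.log (1 + ‖r‖ ^ 2))
    (β₁₂ β₂₁ : ℂ)
    (h12 : β₁₂ = (Real.sqrt (2 * Real.pi) : ℂ) * Complex.exp (Complex.I * Real.pi / 4)
        * Complex.exp (-(Real.pi * ν / 2 : ℝ))
        / ((starRingEnd ℂ) r * Complex.Gamma (-(Complex.I * ν))))
    (h21 : β₂₁ = -(Real.sqrt (2 * Real.pi) : ℂ) * Complex.exp (-(Complex.I * Real.pi / 4))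
        * Complex.exp (-(Real.pi * ν / 2 : ℝ))
        / (r * Complex.Gamma (Complex.I * ν))) :
    β₁₂ * β₂₁ = (ν : ℂ) := by
  have hπ : (0:ℝ) < Real.pi := Real.pi_pos
  have habs : 0 < ‖r‖ := norm_pos_iff.mpr hr
  have h1lt : (1:ℝ) < 1 + ‖r‖ ^ 2 := by nlinarith
  have hνneg : ν < 0 := by
    rw [hν]
    have hlog : 0 < Real.log (1 + ‖r‖ ^ 2) := Real.log_pos h1lt
    have : 0 < 1 / (2 * Real.pi) := by positivity
    nlinarith
  have hνne : ν ≠ 0 := ne_of_lt hνneg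
  -- |r|² = exp(-2πν) - 1
  have hexp2 : Real.exp (-(2 * Real.pi * ν)) = 1 + ‖r‖ ^ 2 := by
    have : -(2 * Real.pi * ν) = Real.log (1 + ‖r‖ ^ 2) := by
      rw [hν]; field_simp
    rw [this, Real.exp_log (by linarith)]
  -- key real identity: -2·e^{-πν}·sinh(πν) = |r|²
  have hkey : -2 * Real.exp (-(Real.pi * ν)) * Real.sinh (Real.pi * ν)
      = ‖r‖ ^ 2 := by
    rw [Real.sinh_eq]
    have e1 : Real.exp (-(Real.pi * ν)) * Real.exp (Real.pi * ν) = 1 := by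
      rw [← Real.exp_add]; simp
    have e2 : Real.exp (-(Real.pi * ν)) * Real.exp (-(Real.pi * ν))
        = Real.exp (-(2 * Real.pi * ν)) := by
      rw [← Real.exp_add]; ring_nf
    nlinarith [hexp2]
  -- Gamma reflection
  set z : ℂ := Complex.I * ν with hzdef
  have hz : z ≠ 0 := by
    simp [hzdef, Complex.I_ne_zero, Complex.ofReal_eq_zero, hνne]
  have hΓz : Complex.Gamma z ≠ 0 := by
    refine Complex.Gamma_ne_zero fun m => ?_
    intro h
    have := congrArg Complex.im h
    simp [hzdef] at this
    exact hνne this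
  have hΓnz : Complex.Gamma (-z) ≠ 0 := by
    refine Complex.Gamma_ne_zero fun m => ?_
    intro h
    have := congrArg Complex.im h
    simp [hzdef] at this
    exact hνne this
  have hsinh : Real.sinh (Real.pi * ν) ≠ 0 :=
    Real.sinh_ne_zero.2 (mul_ne_zero (ne_of_gt hπ) hνne)
  have h4 : Complex.Gamma (1 - z) = (-z) * Complex.Gamma (-z) := by
    rw [show (1:ℂ) - z = -z + 1 by ring, Complex.Gamma_add_one _ (neg_ne_zero.2 hz)]
  have hs : Complex.sin ((Real.pi : ℂ) * z) = (Real.sinh (Real.pi * ν) : ℂ) * Complex.I := by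
    rw [show (Real.pi : ℂ) * z = ((Real.pi * ν : ℝ) : ℂ) * Complex.I by
      push_cast [hzdef]; ring, Complex.sin_mul_I, Complex.ofReal_sinh]
  have hrefl := Complex.Gamma_mul_Gamma_one_sub z
  rw [h4, hs] at hrefl
  -- hrefl : Γ z * (-z * Γ (-z)) = π / (sinh(πν) * I)
  have hΓprod : Complex.Gamma z * Complex.Gamma (-z)
      = (Real.pi : ℂ) / ((ν : ℂ) * (Real.sinh (Real.pi * ν) : ℂ)) := by
    have hνz : (ν : ℂ) ≠ 0 := Complex.ofReal_ne_zero.2 hνne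
    have hsz : ((Real.sinh (Real.pi * ν) : ℝ) : ℂ) ≠ 0 := Complex.ofReal_ne_zero.2 hsinh
    have hsI : ((Real.sinh (Real.pi * ν) : ℝ) : ℂ) * Complex.I ≠ 0 :=
      mul_ne_zero hsz Complex.I_ne_zero
    have h5 : Complex.Gamma z * (-z * Complex.Gamma (-z))
        * (((Real.sinh (Real.pi * ν) : ℝ) : ℂ) * Complex.I) = (Real.pi : ℂ) := by
      rw [hrefl, div_mul_cancel₀ _ hsI]
    rw [eq_div_iff (mul_ne_zero hνz hsz)]
    simp only [hzdef] at h5 ⊢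
    linear_combination h5 + Complex.Gamma (Complex.I * ↑ν) * Complex.Gamma (-(Complex.I * ↑ν))
      * (ν : ℂ) * ((Real.sinh (Real.pi * ν) : ℝ) : ℂ) * Complex.I_sq
  -- now compute the product
  rw [h12, h21, div_mul_div_comm]
  have hnum : (Real.sqrt (2 * Real.pi) : ℂ) * Complex.exp (Complex.I * Real.pi / 4)
      * Complex.exp (-(Real.pi * ν / 2 : ℝ))
      * (-(Real.sqrt (2 * Real.pi) : ℂ) * Complex.exp (-(Complex.I * Real.pi / 4))
      * Complex.exp (-(Real.pi * ν / 2 : ℝ)))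
      = -((2 * Real.pi : ℝ) : ℂ) * ((Real.exp (-(Real.pi * ν)) : ℝ) : ℂ) := by
    have hsq : (Real.sqrt (2 * Real.pi) : ℂ) * (Real.sqrt (2 * Real.pi) : ℂ)
        = ((2 * Real.pi : ℝ) : ℂ) := by
      rw [← Complex.ofReal_mul, Real.mul_self_sqrt (by positivity)]
    have he1 : Complex.exp (Complex.I * Real.pi / 4) * Complex.exp (-(Complex.I * Real.pi / 4))
        = 1 := by rw [← Complex.exp_add]; simp
    have he2 : Complex.exp (-(Real.pi * ν / 2 : ℝ) : ℂ) * Complex.exp (-(Real.pi * ν / 2 : ℝ) : ℂ)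
        = ((Real.exp (-(Real.pi * ν)) : ℝ) : ℂ) := by
      rw [← Complex.exp_add, Complex.ofReal_exp]; norm_num; ring_nf
    calc (Real.sqrt (2 * Real.pi) : ℂ) * Complex.exp (Complex.I * Real.pi / 4)
      * Complex.exp (-(Real.pi * ν / 2 : ℝ))
      * (-(Real.sqrt (2 * Real.pi) : ℂ) * Complex.exp (-(Complex.I * Real.pi / 4))
      * Complex.exp (-(Real.pi * ν / 2 : ℝ)))
        = -(((Real.sqrt (2 * Real.pi) : ℂ) * (Real.sqrt (2 * Real.pi) : ℂ))
          * (Complex.exp (Complex.I * Real.pi / 4) * Complex.exp (-(Complex.I * Real.pi / 4)))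
          * (Complex.exp (-(Real.pi * ν / 2 : ℝ) : ℂ)
            * Complex.exp (-(Real.pi * ν / 2 : ℝ) : ℂ))) := by ring
      _ = -((2 * Real.pi : ℝ) : ℂ) * ((Real.exp (-(Real.pi * ν)) : ℝ) : ℂ) := by
          rw [hsq, he1, he2]; ring
  have hden : (starRingEnd ℂ) r * Complex.Gamma (-(Complex.I * ν))
      * (r * Complex.Gamma (Complex.I * ν))
      = ((‖r‖ ^ 2 : ℝ) : ℂ) * ((Real.pi : ℂ) / ((ν : ℂ) * (Real.sinh (Real.pi * ν) : ℂ))) := by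
    have hc : (starRingEnd ℂ) r * r = ((‖r‖ ^ 2 : ℝ) : ℂ) := by
      rw [mul_comm, Complex.mul_conj, Complex.normSq_eq_norm_sq]
    calc (starRingEnd ℂ) r * Complex.Gamma (-(Complex.I * ν)) * (r * Complex.Gamma (Complex.I * ν))
        = ((starRingEnd ℂ) r * r) * (Complex.Gamma z * Complex.Gamma (-z)) := by
          rw [hzdef]; ring
      _ = ((‖r‖ ^ 2 : ℝ) : ℂ) * ((Real.pi : ℂ) / ((ν : ℂ) * (Real.sinh (Real.pi * ν) : ℂ))) := by
          rw [hc, hΓprod]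
  rw [hnum, hden]
  have hπc : (Real.pi : ℂ) ≠ 0 := Complex.ofReal_ne_zero.2 (ne_of_gt hπ)
  have hνz : (ν : ℂ) ≠ 0 := Complex.ofReal_ne_zero.2 hνne
  have hsz : (Real.sinh (Real.pi * ν) : ℂ) ≠ 0 := Complex.ofReal_ne_zero.2 hsinh
  have habsz : ((‖r‖ ^ 2 : ℝ) : ℂ) ≠ 0 := Complex.ofReal_ne_zero.2 (pow_ne_zero 2 (ne_of_gt habs))
  rw [div_eq_iff (by
    apply mul_ne_zero habsz
    exact div_ne_zero hπc (mul_ne_zero hνz hsz))]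
  have : ((‖r‖ ^ 2 : ℝ) : ℂ)
      = -2 * ((Real.exp (-(Real.pi * ν)) : ℝ) : ℂ) * ((Real.sinh (Real.pi * ν) : ℝ) : ℂ) := by
    rw [← hkey]; push_cast; ring
  rw [this, div_eq_mul_inv, mul_inv]
  simp only [Complex.ofReal_exp, Complex.ofReal_sinh, Complex.ofReal_mul, Complex.ofReal_neg,
    Complex.ofReal_ofNat]
  have hsz' : Complex.sinh ((Real.pi : ℂ) * (ν : ℂ)) ≠ 0 := by
    rw [show (Real.pi : ℂ) * (ν : ℂ) = ((Real.pi * ν : ℝ) : ℂ) by push_cast; ring,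
      ← Complex.ofReal_sinh]
    exact hsz
  have hc1 : (ν : ℂ) * ((ν : ℂ))⁻¹ = 1 := mul_inv_cancel₀ hνz
  have hc2 : Complex.sinh ((Real.pi : ℂ) * (ν : ℂ))
      * (Complex.sinh ((Real.pi : ℂ) * (ν : ℂ)))⁻¹ = 1 := mul_inv_cancel₀ hsz'
  linear_combination (2 * (Real.pi : ℂ) * Complex.exp (-((Real.pi : ℂ) * (ν : ℂ)))
      * Complex.sinh ((Real.pi : ℂ) * (ν : ℂ))
      * (Complex.sinh ((Real.pi : ℂ) * (ν : ℂ)))⁻¹) * hc1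
    + (2 * (Real.pi : ℂ) * Complex.exp (-((Real.pi : ℂ) * (ν : ℂ)))) * hc2
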